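/- Let ABCD be an arbitrary quadrilateral in the Euclidean plane whose diagonals AC and BD meet at a point P. Let X be the intersection point of the perpendicular bisectors of the segments AC and BD, let Y be the intersection point of the perpendicular bisectors of the segments AB and CD, and let Z be the intersection point of the perpendicular bisectors of the segments AD and BC (assume each pair of perpendicular bisectors is non-parallel, so these points exist). Let W = Y + Z − X, so that XYWZ is a parallelogram, and assume W ≠ P. Let the line through P perpendicular to the line PW meet line AD at Q and line BC at R (assume these intersections exist). Then P is the midpoint of the segment QR. -/

import Mathlib

open scoped InnerProductSpace


noncomputable abbrev E2 := EuclideanSpace ℝ (Fin 2)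

lemma dist_coords (x y : E2) : dist x y = Real.sqrt ((x 0 - y 0)^2 + (x 1 - y 1)^2) := by
  rw [EuclideanSpace.dist_eq]
  congr 1
  simp [Fin.sum_univ_two, Real.dist_eq, sq_abs]

lemma inner_coords (x y : E2) : ⟪x, y⟫_ℝ = x 0 * y 0 + x 1 * y 1 := by
  simp [PiLp.inner_apply, Fin.sum_univ_two, RCLike.inner_apply, conj_trivial]
  ring

lemma sub_coords (x y : E2) (i : Fin 2) : (x - y) i = x i - y i := rfl

lemma smul_coords (r : ℝ) (x : E2) (i : Fin 2) : (r • x) i = r * x i := rfl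

lemma collinear_param {A B P : E2} (h : Collinear ℝ ({A, B, P} : Set E2)) (hAB : A ≠ B) :
    ∃ r : ℝ, P - A = r • (B - A) := by
  rw [collinear_iff_exists_forall_eq_smul_vadd] at h
  obtain ⟨p₀, v, hv⟩ := h
  obtain ⟨rA, hA⟩ := hv A (by simp)
  obtain ⟨rB, hB⟩ := hv B (by simp)
  obtain ⟨rP, hP⟩ := hv P (by simp)
  have hBA : B - A = (rB - rA) • v := by
    rw [hA, hB]; simp [sub_smul]
  have hPA : P - A = (rP - rA) • v := by
    rw [hA, hP]; simp [sub_smul]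
  have hne : rB - rA ≠ 0 := by
    intro h0
    apply hAB
    have : B - A = 0 := by rw [hBA, h0, zero_smul]
    have := sub_eq_zero.mp this; exact this.symm
  exact ⟨(rP - rA) / (rB - rA), by rw [hPA, hBA, smul_smul, div_mul_cancel₀ _ hne]⟩

lemma collinear_of_param (U V T : E2) (r : ℝ) (h : V - U = r • (T - U)) :
    Collinear ℝ ({U, V, T} : Set E2) := by
  rw [collinear_iff_exists_forall_eq_smul_vadd]
  refine ⟨U, T - U, ?_⟩
  intro p hp
  rcases hp with rfl | rfl | rfl
  · exact ⟨0, by simp⟩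
  · exact ⟨r, by rw [← h]; simp⟩
  · exact ⟨1, by simp⟩

lemma dist_sq_coords {x y u v : E2} (h : dist x y = dist u v) :
    (x 0 - y 0)^2 + (x 1 - y 1)^2 = (u 0 - v 0)^2 + (u 1 - v 1)^2 := by
  rw [dist_coords, dist_coords] at h
  exact (Real.sqrt_inj (by positivity) (by positivity)).mp h

lemma dist_of_sq_coords {x y u v : E2}
    (h : (x 0 - y 0)^2 + (x 1 - y 1)^2 = (u 0 - v 0)^2 + (u 1 - v 1)^2) :
    dist x y = dist u v := by
  rw [dist_coords, dist_coords, h]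

lemma bisector_cross_ne (A B C D Y : E2) (hAB : A ≠ B)
    (h1 : dist Y A = dist Y B) (h2 : dist Y C = dist Y D)
    (huniq : ∀ Y' : E2, dist Y' A = dist Y' B → dist Y' C = dist Y' D → Y' = Y) :
    (A 0 - B 0) * (C 1 - D 1) - (A 1 - B 1) * (C 0 - D 0) ≠ 0 := by
  intro hcr
  set Y' : E2 := !₂[Y 0 - (A 1 - B 1), Y 1 + (A 0 - B 0)] with hY'
  have hY'0 : Y' 0 = Y 0 - (A 1 - B 1) := rfl
  have hY'1 : Y' 1 = Y 1 + (A 0 - B 0) := rfl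
  have c1 := dist_sq_coords h1
  have c2 := dist_sq_coords h2
  have e1 : dist Y' A = dist Y' B := by
    apply dist_of_sq_coords
    rw [hY'0, hY'1]
    linear_combination c1
  have e2 : dist Y' C = dist Y' D := by
    apply dist_of_sq_coords
    rw [hY'0, hY'1]
    linear_combination c2 - 2 * hcr
  have hEq := huniq Y' e1 e2
  apply hAB
  have h0 : A 1 - B 1 = 0 := by
    have := congrArg (fun (v : E2) => v 0) hEq
    simp only [hY'0] at this
    linarith [this]
  have h1' : A 0 - B 0 = 0 := by
    have := congrArg (fun (v : E2) => v 1) hEq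
    simp only [hY'1] at this
    linarith [this]
  ext i
  fin_cases i
  · exact sub_eq_zero.mp h1'
  · exact sub_eq_zero.mp h0


/-- **The second generalization of the Butterfly Theorem.** Let `ABCD` be an arbitrary
quadrilateral whose diagonals `AC` and `BD` meet at `P`.  The perpendicular bisectors
of `AC` and `BD` meet at `X`, those of `AB` and `CD` meet at `Y`, those of `AD` and
`BC` meet at `Z`; let `W = Y + Z - X`, so that `XYWZ` is a parallelogram, with `W ≠ P`.
The line through `P` perpendicular to `PW` meets line `AD` at `Q` and line `BC` at `R`.
Then `P` is the midpoint of `QR`. -/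
theorem butterfly_second_generalization
    (A B C D P X Y Z W Q R : EuclideanSpace ℝ (Fin 2))
    (hAB : A ≠ B) (hAC : A ≠ C) (hAD : A ≠ D) (hBC : B ≠ C) (hBD : B ≠ D) (hCD : C ≠ D)
    (hABC : ¬ Collinear ℝ ({A, B, C} : Set (EuclideanSpace ℝ (Fin 2))))
    (hABD : ¬ Collinear ℝ ({A, B, D} : Set (EuclideanSpace ℝ (Fin 2))))
    (hACD : ¬ Collinear ℝ ({A, C, D} : Set (EuclideanSpace ℝ (Fin 2))))
    (hBCD : ¬ Collinear ℝ ({B, C, D} : Set (EuclideanSpace ℝ (Fin 2))))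
    (hPAC : Collinear ℝ ({A, C, P} : Set (EuclideanSpace ℝ (Fin 2))))
    (hPBD : Collinear ℝ ({B, D, P} : Set (EuclideanSpace ℝ (Fin 2))))
    -- `X` is the intersection point of the perpendicular bisectors of `AC` and `BD`
    (hX : dist X A = dist X C ∧ dist X B = dist X D)
    (hXuniq : ∀ X' : EuclideanSpace ℝ (Fin 2),
      dist X' A = dist X' C → dist X' B = dist X' D → X' = X)
    -- `Y` is the intersection point of the perpendicular bisectors of `AB` and `CD`
    (hY : dist Y A = dist Y B ∧ dist Y C = dist Y D)
    (hYuniq : ∀ Y' : EuclideanSpace ℝ (Fin 2),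
      dist Y' A = dist Y' B → dist Y' C = dist Y' D → Y' = Y)
    -- `Z` is the intersection point of the perpendicular bisectors of `AD` and `BC`
    (hZ : dist Z A = dist Z D ∧ dist Z B = dist Z C)
    (hZuniq : ∀ Z' : EuclideanSpace ℝ (Fin 2),
      dist Z' A = dist Z' D → dist Z' B = dist Z' C → Z' = Z)
    (hW : W = Y + Z - X) (hWP : W ≠ P)
    (hQAD : Collinear ℝ ({A, D, Q} : Set (EuclideanSpace ℝ (Fin 2))))
    (hQperp : ⟪Q - P, W - P⟫_ℝ = 0)
    (hRBC : Collinear ℝ ({B, C, R} : Set (EuclideanSpace ℝ (Fin 2))))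
    (hRperp : ⟪R - P, W - P⟫_ℝ = 0) :
    P = midpoint ℝ Q R := by
  obtain ⟨al, hal⟩ := collinear_param hPAC hAC
  obtain ⟨be, hbe⟩ := collinear_param hPBD hBD
  obtain ⟨t, htq⟩ := collinear_param hQAD hAD
  obtain ⟨s, hsr⟩ := collinear_param hRBC hBC
  have hpa0 : P 0 - A 0 = al * (C 0 - A 0) := congrArg (fun v : E2 => v 0) hal
  have hpa1 : P 1 - A 1 = al * (C 1 - A 1) := congrArg (fun v : E2 => v 1) hal
  have hpb0 : P 0 - B 0 = be * (D 0 - B 0) := congrArg (fun v : E2 => v 0) hbe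
  have hpb1 : P 1 - B 1 = be * (D 1 - B 1) := congrArg (fun v : E2 => v 1) hbe
  have hq0 : Q 0 - A 0 = t * (D 0 - A 0) := congrArg (fun v : E2 => v 0) htq
  have hq1 : Q 1 - A 1 = t * (D 1 - A 1) := congrArg (fun v : E2 => v 1) htq
  have hr0 : R 0 - B 0 = s * (C 0 - B 0) := congrArg (fun v : E2 => v 0) hsr
  have hr1 : R 1 - B 1 = s * (C 1 - B 1) := congrArg (fun v : E2 => v 1) hsr
  have hw0 : W 0 = Y 0 + Z 0 - X 0 := congrArg (fun v : E2 => v 0) hW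
  have hw1 : W 1 = Y 1 + Z 1 - X 1 := congrArg (fun v : E2 => v 1) hW
  have hx1c := dist_sq_coords hX.1
  have hx2c := dist_sq_coords hX.2
  have hy1c := dist_sq_coords hY.1
  have hy2c := dist_sq_coords hY.2
  have hz1c := dist_sq_coords hZ.1
  have hz2c := dist_sq_coords hZ.2
  have hqpc : (Q 0 - P 0) * (W 0 - P 0) + (Q 1 - P 1) * (W 1 - P 1) = 0 := by
    rw [inner_coords] at hQperp; exact hQperp
  have hrpc : (R 0 - P 0) * (W 0 - P 0) + (R 1 - P 1) * (W 1 - P 1) = 0 := by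
    rw [inner_coords] at hRperp; exact hRperp
  -- nondegeneracy of the parameters
  have halne0 : al ≠ 0 := by
    intro h
    rw [h, zero_smul] at hal
    have hPA : P = A := sub_eq_zero.mp hal
    apply hABD
    rw [Set.insert_comm]
    exact collinear_of_param B A D be (by rw [← hPA]; exact hbe)
  have halne1 : al ≠ 1 := by
    intro h
    rw [h, one_smul] at hal
    have hPC : P = C := sub_left_inj.mp hal
    exact hBCD (collinear_of_param B C D be (by rw [← hPC]; exact hbe))
  have hbene0 : be ≠ 0 := by
    intro h
    rw [h, zero_smul] at hbe
    have hPB : P = B := sub_eq_zero.mp hbe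
    exact hABC (collinear_of_param A B C al (by rw [← hPB]; exact hal))
  have hbene1 : be ≠ 1 := by
    intro h
    rw [h, one_smul] at hbe
    have hPD : P = D := sub_left_inj.mp hbe
    apply hACD
    rw [Set.pair_comm C D]
    exact collinear_of_param A D C al (by rw [← hPD]; exact hal)
  -- cross-product nondegeneracies from uniqueness of the bisector intersections
  have hcrY := bisector_cross_ne A B C D Y hAB hY.1 hY.2 hYuniq
  have hcrZ := bisector_cross_ne A D B C Z hAD hZ.1 hZ.2 hZuniq
  have hcrX := bisector_cross_ne A C B D X hAC hX.1 hX.2 hXuniq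
  have hcef : (C 0 - A 0) * (D 1 - B 1) - (C 1 - A 1) * (D 0 - B 0) ≠ 0 := by
    intro h
    exact hcrX (by linear_combination h)
  have habd : al - be ≠ 0 := by
    intro h
    apply hcrY
    linear_combination (D 1 - C 1 - B 1 + A 1)*hpa0 + (-(D 0) + C 0 + B 0 - A 0)*hpa1
      + (-(D 1) + C 1 + B 1 - A 1)*hpb0 + (D 0 - C 0 - B 0 + A 0)*hpb1
      + ((C 0 - A 0) * (D 1 - B 1) - (C 1 - A 1) * (D 0 - B 0))*h
  have hzd : al + be - 1 ≠ 0 := by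
    intro h
    apply hcrZ
    linear_combination (D 1 + C 1 - B 1 - A 1)*hpa0 + (-(D 0) - C 0 + B 0 + A 0)*hpa1
      + (-(D 1) - C 1 + B 1 + A 1)*hpb0 + (D 0 + C 0 - B 0 - A 0)*hpb1
      + ((C 0 - A 0) * (D 1 - B 1) - (C 1 - A 1) * (D 0 - B 0))*h
  have hWne : ¬ (((W 0 - P 0) * (C 0 - A 0) + (W 1 - P 1) * (C 1 - A 1)) = 0 ∧ ((W 0 - P 0) * (D 0 - B 0) + (W 1 - P 1) * (D 1 - B 1)) = 0) := by
    rintro ⟨h1, h2⟩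
    apply hWP
    have u0 : (W 0 - P 0) * ((C 0 - A 0) * (D 1 - B 1) - (C 1 - A 1) * (D 0 - B 0)) = 0 := by
      linear_combination (D 1 - B 1)*h1 - (C 1 - A 1)*h2
    have u1 : (W 1 - P 1) * ((C 0 - A 0) * (D 1 - B 1) - (C 1 - A 1) * (D 0 - B 0)) = 0 := by
      linear_combination (C 0 - A 0)*h2 - (D 0 - B 0)*h1
    have w0' : W 0 = P 0 := sub_eq_zero.mp ((mul_eq_zero.mp u0).resolve_right hcef)
    have w1' : W 1 = P 1 := sub_eq_zero.mp ((mul_eq_zero.mp u1).resolve_right hcef)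
    ext i
    fin_cases i
    · exact w0'
    · exact w1'

  have eX1 : 2*((X 0 - P 0)*(C 0 - A 0) + (X 1 - P 1)*(C 1 - A 1))
      + (2*al - 1)*((C 0 - A 0)^2 + (C 1 - A 1)^2) = 0 := by
    linear_combination hx1c + (-2*(C 0 - A 0))*hpa0 + (-2*(C 1 - A 1))*hpa1
  have eX2 : 2*((X 0 - P 0)*(D 0 - B 0) + (X 1 - P 1)*(D 1 - B 1))
      + (2*be - 1)*((D 0 - B 0)^2 + (D 1 - B 1)^2) = 0 := by
    linear_combination hx2c + (-2*(D 0 - B 0))*hpb0 + (-2*(D 1 - B 1))*hpb1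

  have eY1 : -2*al*((Y 0 - P 0)*(C 0 - A 0) + (Y 1 - P 1)*(C 1 - A 1))
      + 2*be*((Y 0 - P 0)*(D 0 - B 0) + (Y 1 - P 1)*(D 1 - B 1))
      - al^2*((C 0 - A 0)^2 + (C 1 - A 1)^2) + be^2*((D 0 - B 0)^2 + (D 1 - B 1)^2) = 0 := by
    linear_combination (-1)*hy1c + (-B 0 - A 0 - be*D 0 + be*B 0 + al*C 0 - al*A 0 + 2*Y 0)*hpa0 + (-B 1 - A 1 - be*D 1 + be*B 1 + al*C 1 - al*A 1 + 2*Y 1)*hpa1 + (B 0 + A 0 - be*D 0 + be*B 0 + al*C 0 - al*A 0 - 2*Y 0)*hpb0 + (B 1 + A 1 - be*D 1 + be*B 1 + al*C 1 - al*A 1 - 2*Y 1)*hpb1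

  have eY2 : 2*(1-al)*((Y 0 - P 0)*(C 0 - A 0) + (Y 1 - P 1)*(C 1 - A 1))
      - 2*(1-be)*((Y 0 - P 0)*(D 0 - B 0) + (Y 1 - P 1)*(D 1 - B 1))
      - (1-al)^2*((C 0 - A 0)^2 + (C 1 - A 1)^2) + (1-be)^2*((D 0 - B 0)^2 + (D 1 - B 1)^2) = 0 := by
    linear_combination (-1)*hy2c + (-2*C 0 - B 0 + A 0 - be*D 0 + be*B 0 + al*C 0 - al*A 0 + 2*Y 0)*hpa0 + (-2*C 1 - B 1 + A 1 - be*D 1 + be*B 1 + al*C 1 - al*A 1 + 2*Y 1)*hpa1 + (2*D 0 - B 0 + A 0 - be*D 0 + be*B 0 + al*C 0 - al*A 0 - 2*Y 0)*hpb0 + (2*D 1 - B 1 + A 1 - be*D 1 + be*B 1 + al*C 1 - al*A 1 - 2*Y 1)*hpb1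

  have eZ1 : -2*al*((Z 0 - P 0)*(C 0 - A 0) + (Z 1 - P 1)*(C 1 - A 1))
      - 2*(1-be)*((Z 0 - P 0)*(D 0 - B 0) + (Z 1 - P 1)*(D 1 - B 1))
      - al^2*((C 0 - A 0)^2 + (C 1 - A 1)^2) + (1-be)^2*((D 0 - B 0)^2 + (D 1 - B 1)^2) = 0 := by
    linear_combination (-1)*hz1c + (-B 0 - A 0 - be*D 0 + be*B 0 + al*C 0 - al*A 0 + 2*Z 0)*hpa0 + (-B 1 - A 1 - be*D 1 + be*B 1 + al*C 1 - al*A 1 + 2*Z 1)*hpa1 + (2*D 0 - B 0 + A 0 - be*D 0 + be*B 0 + al*C 0 - al*A 0 - 2*Z 0)*hpb0 + (2*D 1 - B 1 + A 1 - be*D 1 + be*B 1 + al*C 1 - al*A 1 - 2*Z 1)*hpb1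

  have eZ2 : -2*(1-al)*((Z 0 - P 0)*(C 0 - A 0) + (Z 1 - P 1)*(C 1 - A 1))
      - 2*be*((Z 0 - P 0)*(D 0 - B 0) + (Z 1 - P 1)*(D 1 - B 1))
      + (1-al)^2*((C 0 - A 0)^2 + (C 1 - A 1)^2) - be^2*((D 0 - B 0)^2 + (D 1 - B 1)^2) = 0 := by
    linear_combination (-1)*hz2c + (2*C 0 + B 0 - A 0 + be*D 0 - be*B 0 - al*C 0 + al*A 0 - 2*Z 0)*hpa0 + (2*C 1 + B 1 - A 1 + be*D 1 - be*B 1 - al*C 1 + al*A 1 - 2*Z 1)*hpa1 + (-B 0 - A 0 + be*D 0 - be*B 0 - al*C 0 + al*A 0 + 2*Z 0)*hpb0 + (-B 1 - A 1 + be*D 1 - be*B 1 - al*C 1 + al*A 1 + 2*Z 1)*hpb1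

  have eperp1 : al*(t-1)*((W 0 - P 0) * (C 0 - A 0) + (W 1 - P 1) * (C 1 - A 1)) + t*(1-be)*((W 0 - P 0) * (D 0 - B 0) + (W 1 - P 1) * (D 1 - B 1)) = 0 := by
    linear_combination hqpc + (P 0 - W 0)*hq0 + (P 1 - W 1)*hq1
      + (t*B 0 + t*be*D 0 - t*be*B 0 - P 0 + W 0 - W 0*t)*hpa0 + (t*B 1 + t*be*D 1 - t*be*B 1 - P 1 + W 1 - W 1*t)*hpa1 + (-t*A 0 - t*al*C 0 + t*al*A 0 + W 0*t)*hpb0 + (-t*A 1 - t*al*C 1 + t*al*A 1 + W 1*t)*hpb1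

  have eperp2 : s*(1-al)*((W 0 - P 0) * (C 0 - A 0) + (W 1 - P 1) * (C 1 - A 1)) + be*(s-1)*((W 0 - P 0) * (D 0 - B 0) + (W 1 - P 1) * (D 1 - B 1)) = 0 := by
    linear_combination hrpc + (P 0 - W 0)*hr0 + (P 1 - W 1)*hr1
      + (B 0 + be*D 0 - be*B 0 - s*B 0 - s*be*D 0 + s*be*B 0 - P 0 + W 0*s)*hpa0 + (B 1 + be*D 1 - be*B 1 - s*B 1 - s*be*D 1 + s*be*B 1 - P 1 + W 1*s)*hpa1 + (-A 0 - al*C 0 + al*A 0 + s*A 0 + s*al*C 0 - s*al*A 0 + W 0 - W 0*s)*hpb0 + (-A 1 - al*C 1 + al*A 1 + s*A 1 + s*al*C 1 - s*al*A 1 + W 1 - W 1*s)*hpb1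

  have mainW : (al - be) * (al + be - 1) * (al*(1-al)*(2*be-1)*((W 0 - P 0) * (C 0 - A 0) + (W 1 - P 1) * (C 1 - A 1)) - be*(1-be)*(2*al-1)*((W 0 - P 0) * (D 0 - B 0) + (W 1 - P 1) * (D 1 - B 1))) = 0 := by
    linear_combination ((1/2)*al*be - (3/2)*al*be^2 + al*be^3 - (1/2)*al^2 + (1/2)*al^2*be + (3/2)*al^2*be^2 - al^2*be^3 + al^3 - 2*al^3*be - (1/2)*al^4 + al^4*be)*eX1 + (-(1/2)*be^2 + be^3 - (1/2)*be^4 + (1/2)*al*be + (1/2)*al*be^2 - 2*al*be^3 + al*be^4 - (3/2)*al^2*be + (3/2)*al^2*be^2 + al^3*be - al^3*be^2)*eX2 + ((1/2)*be - be^2 + (1/2)*be^3 - (1/2)*al + al*be^2 - (1/2)*al*be^3 + al^2 - al^2*be - (1/2)*al^3 + (1/2)*al^3*be)*eY1 + ((1/2)*al*be^2 - (1/2)*al*be^3 - (1/2)*al^2*be + (1/2)*al^3*be)*eY2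
      + (-(1/2)*be^2 + (1/2)*be^3 + (1/2)*al*be + (1/2)*al*be^2 - (1/2)*al*be^3 - al^2*be + (1/2)*al^3*be)*eZ1 + ((1/2)*al*be - al*be^2 + (1/2)*al*be^3 - (1/2)*al^2 + (1/2)*al^2*be + (1/2)*al^3 - (1/2)*al^3*be)*eZ2 + ((al-be)*(al+be-1)*(al*(1-al)*(2*be-1)*(C 0 - A 0) - be*(1-be)*(2*al-1)*(D 0 - B 0)))*hw0 + ((al-be)*(al+be-1)*(al*(1-al)*(2*be-1)*(C 1 - A 1) - be*(1-be)*(2*al-1)*(D 1 - B 1)))*hw1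
  have hK : al*(1-al)*(2*be-1)*((W 0 - P 0) * (C 0 - A 0) + (W 1 - P 1) * (C 1 - A 1)) - be*(1-be)*(2*al-1)*((W 0 - P 0) * (D 0 - B 0) + (W 1 - P 1) * (D 1 - B 1)) = 0 :=
    (mul_eq_zero.mp mainW).resolve_left (mul_ne_zero habd hzd)
  have hGne : (al * ((W 0 - P 0) * (C 0 - A 0) + (W 1 - P 1) * (C 1 - A 1)) + (1 - be) * ((W 0 - P 0) * (D 0 - B 0) + (W 1 - P 1) * (D 1 - B 1))) ≠ 0 := by
    intro h
    have h5 : al * ((W 0 - P 0) * (C 0 - A 0) + (W 1 - P 1) * (C 1 - A 1)) = 0 := by linear_combination t*h - eperp1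
    have hWE0 : ((W 0 - P 0) * (C 0 - A 0) + (W 1 - P 1) * (C 1 - A 1)) = 0 := (mul_eq_zero.mp h5).resolve_left halne0
    have h6 : (1 - be) * ((W 0 - P 0) * (D 0 - B 0) + (W 1 - P 1) * (D 1 - B 1)) = 0 := by linear_combination h - al*hWE0
    have hWF0 : ((W 0 - P 0) * (D 0 - B 0) + (W 1 - P 1) * (D 1 - B 1)) = 0 :=
      (mul_eq_zero.mp h6).resolve_left (sub_ne_zero.mpr (Ne.symm hbene1))
    exact hWne ⟨hWE0, hWF0⟩
  have hHne : ((1 - al) * ((W 0 - P 0) * (C 0 - A 0) + (W 1 - P 1) * (C 1 - A 1)) + be * ((W 0 - P 0) * (D 0 - B 0) + (W 1 - P 1) * (D 1 - B 1))) ≠ 0 := by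
    intro h
    have h7 : be * ((W 0 - P 0) * (D 0 - B 0) + (W 1 - P 1) * (D 1 - B 1)) = 0 := by linear_combination s*h - eperp2
    have hWF0 : ((W 0 - P 0) * (D 0 - B 0) + (W 1 - P 1) * (D 1 - B 1)) = 0 := (mul_eq_zero.mp h7).resolve_left hbene0
    have h8 : (1 - al) * ((W 0 - P 0) * (C 0 - A 0) + (W 1 - P 1) * (C 1 - A 1)) = 0 := by linear_combination h - be*hWF0
    have hWE0 : ((W 0 - P 0) * (C 0 - A 0) + (W 1 - P 1) * (C 1 - A 1)) = 0 :=
      (mul_eq_zero.mp h8).resolve_left (sub_ne_zero.mpr (Ne.symm halne1))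
    exact hWne ⟨hWE0, hWF0⟩
  have g1' : (al * ((W 0 - P 0) * (C 0 - A 0) + (W 1 - P 1) * (C 1 - A 1)) + (1 - be) * ((W 0 - P 0) * (D 0 - B 0) + (W 1 - P 1) * (D 1 - B 1))) * ((1 - al) * ((W 0 - P 0) * (C 0 - A 0) + (W 1 - P 1) * (C 1 - A 1)) + be * ((W 0 - P 0) * (D 0 - B 0) + (W 1 - P 1) * (D 1 - B 1))) * (al*(t-1) + s*(1-al)) = 0 := by
    linear_combination (al*((1 - al) * ((W 0 - P 0) * (C 0 - A 0) + (W 1 - P 1) * (C 1 - A 1)) + be * ((W 0 - P 0) * (D 0 - B 0) + (W 1 - P 1) * (D 1 - B 1))))*eperp1 + ((1-al)*(al * ((W 0 - P 0) * (C 0 - A 0) + (W 1 - P 1) * (C 1 - A 1)) + (1 - be) * ((W 0 - P 0) * (D 0 - B 0) + (W 1 - P 1) * (D 1 - B 1))))*eperp2 + ((W 0 - P 0) * (D 0 - B 0) + (W 1 - P 1) * (D 1 - B 1))*hK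
  have g1 : al*(t-1) + s*(1-al) = 0 :=
    (mul_eq_zero.mp g1').resolve_left (mul_ne_zero hGne hHne)
  have g2' : (al * ((W 0 - P 0) * (C 0 - A 0) + (W 1 - P 1) * (C 1 - A 1)) + (1 - be) * ((W 0 - P 0) * (D 0 - B 0) + (W 1 - P 1) * (D 1 - B 1))) * ((1 - al) * ((W 0 - P 0) * (C 0 - A 0) + (W 1 - P 1) * (C 1 - A 1)) + be * ((W 0 - P 0) * (D 0 - B 0) + (W 1 - P 1) * (D 1 - B 1))) * (t*(1-be) + be*(s-1)) = 0 := by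
    linear_combination ((1-be)*((1 - al) * ((W 0 - P 0) * (C 0 - A 0) + (W 1 - P 1) * (C 1 - A 1)) + be * ((W 0 - P 0) * (D 0 - B 0) + (W 1 - P 1) * (D 1 - B 1))))*eperp1 + (be*(al * ((W 0 - P 0) * (C 0 - A 0) + (W 1 - P 1) * (C 1 - A 1)) + (1 - be) * ((W 0 - P 0) * (D 0 - B 0) + (W 1 - P 1) * (D 1 - B 1))))*eperp2 - ((W 0 - P 0) * (C 0 - A 0) + (W 1 - P 1) * (C 1 - A 1))*hK
  have g2 : t*(1-be) + be*(s-1) = 0 :=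
    (mul_eq_zero.mp g2').resolve_left (mul_ne_zero hGne hHne)
  have hsum : Q + R = P + P := by
    ext i
    fin_cases i
    · show Q 0 + R 0 = P 0 + P 0
      linear_combination hq0 + hr0 + (t - s - 1)*hpa0 + (s - t - 1)*hpb0
        + (C 0 - A 0)*g1 + (D 0 - B 0)*g2
    · show Q 1 + R 1 = P 1 + P 1
      linear_combination hq1 + hr1 + (t - s - 1)*hpa1 + (s - t - 1)*hpb1
        + (C 1 - A 1)*g1 + (D 1 - B 1)*g2
  have : midpoint ℝ Q R = midpoint ℝ P P := by
    rw [midpoint_eq_smul_add, midpoint_eq_smul_add, hsum]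
  rw [this, midpoint_self]
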